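/- (Combinatorial content of Corollary 4.7(1)) Fix integers n ≥ k ≥ 2 and take m = n − k + 1, s_j = j − 1 and t_j = k + j − 1 for 1 ≤ j ≤ m (so S = {0, 1, …, n − k}, T = {k, k + 1, …, n}, and every relation interval has length k). Then for every 1 ≤ p ≤ n: (i) if k divides p then l_p = 2(p/k), and otherwise l_p = 2⌊p/k⌋ + 1; (ii) a_{2l}^{(p)} = p − kl for every l with 2l ≤ l_p, and a_{2l+1}^{(p)} = p − kl − 1 for every l with 2l + 1 ≤ l_p. -/
import Mathlib


/-- `d(p) = max { s j : t j ≤ p }`, with `⊥` meaning "undefined" (i.e. `-∞`). -/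
noncomputable def dvalue (m : ℕ) (s t : ℕ → ℤ) (p : ℤ) : WithBot ℤ :=
  ((Finset.range m).filter (fun j => t j ≤ p)).sup (fun j => (s j : WithBot ℤ))

/-- `d†(p) = min { t j : s j ≥ p }`, with `⊤` meaning "undefined" (i.e. `+∞`). -/
noncomputable def ddual (m : ℕ) (s t : ℕ → ℤ) (p : ℤ) : WithTop ℤ :=
  ((Finset.range m).filter (fun j => p ≤ s j)).inf (fun j => (t j : WithTop ℤ))

/-- The extension of `d` to `WithBot ℤ`, sending `⊥` to `⊥`. -/
noncomputable def dW (m : ℕ) (s t : ℕ → ℤ) : WithBot ℤ → WithBot ℤ :=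
  WithBot.recBotCoe ⊥ (dvalue m s t)

/-- The extension of `d†` to `WithTop ℤ`, sending `⊤` to `⊤`. -/
noncomputable def dtW (m : ℕ) (s t : ℕ → ℤ) : WithTop ℤ → WithTop ℤ :=
  WithTop.recTopCoe ⊤ (ddual m s t)

/-- The (total extension of the) sequence `a_i^{(p)}`:
`a_0 = p`, `a_1 = p - 1`, `a_{i+2} = d(a_i)`.  For `i ≤ l_p` this agrees with the
sequence of the paper. -/
noncomputable def aSeq (m : ℕ) (s t : ℕ → ℤ) (p : ℤ) : ℕ → WithBot ℤ
  | 0 => (p : WithBot ℤ)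
  | 1 => ((p - 1 : ℤ) : WithBot ℤ)
  | i + 2 => dW m s t (aSeq m s t p i)

/-- The length `l_p`: `l_0 = 0`, and for `p ≠ 0` it is the least `j ≥ 1` with
`d(a_{j-1}^{(p)}) = d(a_j^{(p)})` (undefined values compared as `⊥`). -/
noncomputable def lSeq (m : ℕ) (s t : ℕ → ℤ) (p : ℤ) : ℕ :=
  if p = 0 then 0
  else sInf {j : ℕ | 1 ≤ j ∧ dW m s t (aSeq m s t p (j - 1)) = dW m s t (aSeq m s t p j)}

/-- The (total extension of the) dual sequence `a_i^{(p)†}`: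
`a_0 = p`, `a_1 = p + 1`, `a_{i+2} = d†(a_i)`. -/
noncomputable def aSeqD (m : ℕ) (s t : ℕ → ℤ) (p : ℤ) : ℕ → WithTop ℤ
  | 0 => (p : WithTop ℤ)
  | 1 => ((p + 1 : ℤ) : WithTop ℤ)
  | i + 2 => dtW m s t (aSeqD m s t p i)

/-- The dual length `l_p†`: `l_n† = 0`, and for `p ≠ n` it is the least `j ≥ 1` with
`d†(a_{j-1}^{(p)†}) = d†(a_j^{(p)†})` (undefined values compared as `⊤`). -/
noncomputable def lSeqD (n : ℤ) (m : ℕ) (s t : ℕ → ℤ) (p : ℤ) : ℕ :=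
  if p = n then 0
  else sInf {j : ℕ | 1 ≤ j ∧ dtW m s t (aSeqD m s t p (j - 1)) = dtW m s t (aSeqD m s t p j)}

lemma sup_range_coe (c : ℕ) :
    (Finset.range (c+1)).sup (fun j => ((j : ℤ) : WithBot ℤ)) = ((c : ℤ) : WithBot ℤ) := by
  apply le_antisymm
  · exact Finset.sup_le fun j hj => by
      simp only [Finset.mem_range] at hj
      exact WithBot.coe_le_coe.mpr (by exact_mod_cast Nat.lt_succ_iff.mp hj)
  · exact Finset.le_sup (f := fun j : ℕ => ((j : ℤ) : WithBot ℤ)) (Finset.self_mem_range_succ c)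

lemma dvalue_eval (n : ℤ) (m : ℕ) (s t : ℕ → ℤ) (k : ℤ)
    (hm : (m : ℤ) = n - k + 1)
    (hsv : ∀ j : ℕ, j < m → s j = (j : ℤ))
    (htv : ∀ j : ℕ, j < m → t j = k + (j : ℤ))
    (x : ℤ) (hx : x ≤ n) :
    dvalue m s t x = if k ≤ x then ((x - k : ℤ) : WithBot ℤ) else ⊥ := by
  unfold dvalue
  split_ifs with h
  · have hc0 : 0 ≤ x - k := by omega
    set c : ℕ := (x - k).toNat with hcdef
    have hcx : (c : ℤ) = x - k := Int.toNat_of_nonneg hc0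
    have hfilter : (Finset.range m).filter (fun j => t j ≤ x) = Finset.range (c+1) := by
      ext j
      simp only [Finset.mem_filter, Finset.mem_range]
      constructor
      · rintro ⟨hjm, hjt⟩
        rw [htv j hjm] at hjt
        omega
      · intro hj
        have hjm : j < m := by omega
        exact ⟨hjm, by rw [htv j hjm]; omega⟩
    rw [hfilter]
    rw [Finset.sup_congr rfl (fun j hj => by
      rw [hsv j (by simp only [Finset.mem_range] at hj; omega)])]
    rw [sup_range_coe, hcx]
  · have hfilter : (Finset.range m).filter (fun j => t j ≤ x) = ∅ := by
      ext j
      simp only [Finset.mem_filter, Finset.mem_range, Finset.notMem_empty, iff_false, not_and]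
      intro hjm hjt
      rw [htv j hjm] at hjt
      omega
    rw [hfilter, Finset.sup_empty]

theorem corollary_4_7_combinatorics
    (n : ℤ) (m : ℕ) (s t : ℕ → ℤ)
    (hn : 0 ≤ n)
    (hsmono : ∀ i j : ℕ, i < j → j < m → s i < s j)
    (htmono : ∀ i j : ℕ, i < j → j < m → t i < t j)
    (hs0 : ∀ j : ℕ, j < m → 0 ≤ s j)
    (htn : ∀ j : ℕ, j < m → t j ≤ n)
    (hlen : ∀ j : ℕ, j < m → s j + 2 ≤ t j)
    (k : ℤ) (hk2 : 2 ≤ k) (hkn : k ≤ n)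
    (hm : (m : ℤ) = n - k + 1)
    (hsv : ∀ j : ℕ, j < m → s j = (j : ℤ))
    (htv : ∀ j : ℕ, j < m → t j = k + (j : ℤ))
    (p : ℤ) (hp1 : 1 ≤ p) (hpn : p ≤ n) :
    ((k ∣ p → (lSeq m s t p : ℤ) = 2 * (p / k)) ∧
     (¬ k ∣ p → (lSeq m s t p : ℤ) = 2 * (p / k) + 1)) ∧
    (∀ l : ℕ, 2 * l ≤ lSeq m s t p →
      aSeq m s t p (2 * l) = ((p - k * (l : ℤ) : ℤ) : WithBot ℤ)) ∧
    (∀ l : ℕ, 2 * l + 1 ≤ lSeq m s t p →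
      aSeq m s t p (2 * l + 1) = ((p - k * (l : ℤ) - 1 : ℤ) : WithBot ℤ)) := by
  -- evaluation of dW on coerced values
  have hd : ∀ x : ℤ, x ≤ n →
      dW m s t ((x : ℤ) : WithBot ℤ) = if k ≤ x then ((x - k : ℤ) : WithBot ℤ) else ⊥ := by
    intro x hx
    show dvalue m s t x = _
    exact dvalue_eval n m s t k hm hsv htv x hx
  have hk0 : (0 : ℤ) ≤ k := by linarith
  have key : ∀ a b : ℤ, a ≤ b → k * a ≤ k * b :=
    fun a b h => mul_le_mul_of_nonneg_left h hk0
  -- the even-index values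
  have hA : ∀ l : ℕ, 0 ≤ p - k * (l : ℤ) →
      aSeq m s t p (2 * l) = ((p - k * (l : ℤ) : ℤ) : WithBot ℤ) := by
    intro l
    induction l with
    | zero => intro _; norm_num [aSeq]
    | succ l ih =>
      intro hl
      have hcast : ((l + 1 : ℕ) : ℤ) = (l : ℤ) + 1 := by push_cast; ring
      rw [hcast] at hl
      have hexp : k * ((l : ℤ) + 1) = k * (l : ℤ) + k := by ring
      have hl' : 0 ≤ p - k * (l : ℤ) := by linarith
      have hkl : k ≤ p - k * (l : ℤ) := by linarith
      have hln : p - k * (l : ℤ) ≤ n := by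
        have := key 0 (l : ℤ) (by positivity)
        linarith
      have h2 : 2 * (l + 1) = 2 * l + 2 := by ring
      rw [h2, aSeq, ih hl', hd _ hln, if_pos hkl, hcast]
      congr 1
      ring
  -- the odd-index values
  have hB : ∀ l : ℕ, 0 ≤ p - k * (l : ℤ) - 1 →
      aSeq m s t p (2 * l + 1) = ((p - k * (l : ℤ) - 1 : ℤ) : WithBot ℤ) := by
    intro l
    induction l with
    | zero => intro _; norm_num [aSeq]
    | succ l ih =>
      intro hl
      have hcast : ((l + 1 : ℕ) : ℤ) = (l : ℤ) + 1 := by push_cast; ring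
      rw [hcast] at hl
      have hexp : k * ((l : ℤ) + 1) = k * (l : ℤ) + k := by ring
      have hl' : 0 ≤ p - k * (l : ℤ) - 1 := by linarith
      have hkl : k ≤ p - k * (l : ℤ) - 1 := by linarith
      have hln : p - k * (l : ℤ) - 1 ≤ n := by
        have := key 0 (l : ℤ) (by positivity)
        linarith
      have h2 : 2 * (l + 1) + 1 = (2 * l + 1) + 2 := by ring
      rw [h2, aSeq, ih hl', hd _ hln, if_pos hkl, hcast]
      congr 1
      ring
  have hdEven : ∀ l : ℕ, 0 ≤ p - k * (l : ℤ) →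
      dW m s t (aSeq m s t p (2 * l)) =
        if k ≤ p - k * (l : ℤ) then ((p - k * (l : ℤ) - k : ℤ) : WithBot ℤ) else ⊥ := by
    intro l hl
    rw [hA l hl, hd _ (by have := key 0 (l : ℤ) (by positivity); linarith)]
  have hdOdd : ∀ l : ℕ, 0 ≤ p - k * (l : ℤ) - 1 →
      dW m s t (aSeq m s t p (2 * l + 1)) =
        if k ≤ p - k * (l : ℤ) - 1 then ((p - k * (l : ℤ) - 1 - k : ℤ) : WithBot ℤ) else ⊥ := by
    intro l hl
    rw [hB l hl, hd _ (by have := key 0 (l : ℤ) (by positivity); linarith)]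
  -- division setup
  obtain ⟨q, r, hqdef, hrdef, hpqr, hr0, hrk, hq0⟩ :
      ∃ q r : ℤ, q = p / k ∧ r = p % k ∧ p = k * q + r ∧ 0 ≤ r ∧ r < k ∧ 0 ≤ q :=
    ⟨p / k, p % k, rfl, rfl, (Int.mul_ediv_add_emod p k).symm,
      Int.emod_nonneg p (by omega), Int.emod_lt_of_pos p (by omega),
      Int.ediv_nonneg (by omega) hk0⟩
  set q' : ℕ := q.toNat with hq'def
  have hq' : (q' : ℤ) = q := Int.toNat_of_nonneg hq0
  set N : ℕ := if r = 0 then 2 * q' else 2 * q' + 1 with hNdef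
  -- membership of N in the defining set
  have hmemN : N ∈
      {j : ℕ | 1 ≤ j ∧ dW m s t (aSeq m s t p (j - 1)) = dW m s t (aSeq m s t p j)} := by
    by_cases hr : r = 0
    · have hq1 : 1 ≤ q := by
        by_contra h
        push_neg at h
        have := key q 0 (by omega)
        linarith
      have hq1' : 1 ≤ q' := by
        have h1 : (1 : ℤ) ≤ (q' : ℤ) := by rw [hq']; exact hq1
        exact_mod_cast h1
      refine ⟨by simp only [hNdef, if_pos hr]; omega, ?_⟩
      have e1 : N - 1 = 2 * (q' - 1) + 1 := by simp only [hNdef, if_pos hr]; omega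
      have e2 : N = 2 * q' := by simp only [hNdef, if_pos hr]
      have hc1 : ((q' - 1 : ℕ) : ℤ) = q - 1 := by omega
      have hexp : k * (q - 1) = k * q - k := by ring
      rw [e1, e2, hdOdd (q' - 1) (by rw [hc1]; linarith),
        hdEven q' (by rw [hq']; linarith)]
      rw [hc1, hq']
      rw [if_neg (by linarith), if_neg (by linarith)]
    · have hr1 : 1 ≤ r := by omega
      refine ⟨by simp only [hNdef, if_neg hr]; omega, ?_⟩
      have e1 : N - 1 = 2 * q' := by simp only [hNdef, if_neg hr]; omega
      have e2 : N = 2 * q' + 1 := by simp only [hNdef, if_neg hr]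
      rw [e1, e2, hdEven q' (by rw [hq']; linarith), hdOdd q' (by rw [hq']; linarith)]
      rw [hq']
      rw [if_neg (by linarith), if_neg (by linarith)]
  -- lower bound
  have hlow : ∀ j ∈
      {j : ℕ | 1 ≤ j ∧ dW m s t (aSeq m s t p (j - 1)) = dW m s t (aSeq m s t p j)},
      N ≤ j := by
    intro j hj
    by_contra hlt
    push_neg at hlt
    obtain ⟨hj1, hjeq⟩ := hj
    obtain ⟨l, rfl | rfl⟩ : ∃ l, j = 2 * l + 1 ∨ j = 2 * l + 2 := ⟨(j - 1) / 2, by omega⟩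
    · -- j = 2l+1, compare dW(a_{2l}) with dW(a_{2l+1})
      have hlq : (l : ℤ) + 1 ≤ q := by
        have : l + 1 ≤ q' := by
          by_cases hr : r = 0 <;> simp only [hNdef, hr, if_true, if_false] at hlt <;> omega
        omega
      have hkey := key ((l : ℤ) + 1) q hlq
      have hexp : k * ((l : ℤ) + 1) = k * (l : ℤ) + k := by ring
      have hc1 : 0 ≤ p - k * (l : ℤ) := by linarith
      have hc2 : k ≤ p - k * (l : ℤ) := by linarith
      have hc3 : 0 ≤ p - k * (l : ℤ) - 1 := by linarith
      have e1 : 2 * l + 1 - 1 = 2 * l := by omega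
      rw [e1, hdEven l hc1, hdOdd l hc3, if_pos hc2] at hjeq
      by_cases hc4 : k ≤ p - k * (l : ℤ) - 1
      · rw [if_pos hc4] at hjeq
        have := WithBot.coe_injective hjeq
        omega
      · rw [if_neg hc4] at hjeq
        exact WithBot.coe_ne_bot hjeq
    · -- j = 2l+2, compare dW(a_{2l+1}) with dW(a_{2l+2})
      have hlq : (l : ℤ) + 1 ≤ q := by
        have : l + 1 ≤ q' := by
          by_cases hr : r = 0 <;> simp only [hNdef, hr, if_true, if_false] at hlt <;> omega
        omega
      have hkey := key ((l : ℤ) + 1) q hlq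
      have hexp : k * ((l : ℤ) + 1) = k * (l : ℤ) + k := by ring
      have hrpos : 1 ≤ r ∨ (l : ℤ) + 2 ≤ q := by
        by_cases hr : r = 0
        · right
          have : l + 2 ≤ q' := by simp only [hNdef, hr, if_true] at hlt; omega
          omega
        · left; omega
      have hc3 : 0 ≤ p - k * (l : ℤ) - 1 := by linarith
      have hc4 : k ≤ p - k * (l : ℤ) - 1 := by
        rcases hrpos with h | h
        · linarith
        · have hkey2 := key ((l : ℤ) + 2) q h
          have hexp2 : k * ((l : ℤ) + 2) = k * (l : ℤ) + k + k := by ring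
          linarith
      have hcast : ((l + 1 : ℕ) : ℤ) = (l : ℤ) + 1 := by push_cast; ring
      have hc5 : 0 ≤ p - k * ((l + 1 : ℕ) : ℤ) := by rw [hcast]; linarith
      have e1 : 2 * l + 2 - 1 = 2 * l + 1 := by omega
      have e2 : 2 * l + 2 = 2 * (l + 1) := by omega
      rw [e1, e2, hdOdd l hc3, if_pos hc4, hdEven (l + 1) hc5, hcast] at hjeq
      by_cases hc6 : k ≤ p - k * ((l : ℤ) + 1)
      · rw [if_pos hc6] at hjeq
        have h7 := WithBot.coe_injective hjeq
        have : p - k * (l : ℤ) - 1 - k = p - k * ((l : ℤ) + 1) - k := h7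
        linarith
      · rw [if_neg hc6] at hjeq
        exact WithBot.coe_ne_bot hjeq
  -- compute lSeq
  have hlSeq : lSeq m s t p = N := by
    rw [lSeq, if_neg (by omega : p ≠ 0)]
    exact le_antisymm (Nat.sInf_le hmemN) (le_csInf ⟨N, hmemN⟩ hlow)
  -- divisibility vs remainder
  have hdvd : k ∣ p ↔ r = 0 := by
    rw [hrdef]
    exact ⟨fun h => Int.emod_eq_zero_of_dvd h, fun h => Int.dvd_of_emod_eq_zero h⟩
  refine ⟨⟨?_, ?_⟩, ?_, ?_⟩
  · intro h
    have hr : r = 0 := hdvd.mp h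
    rw [hlSeq, ← hqdef]
    simp only [hNdef, if_pos hr]
    push_cast
    omega
  · intro h
    have hr : r ≠ 0 := fun hc => h (hdvd.mpr hc)
    rw [hlSeq, ← hqdef]
    simp only [hNdef, if_neg hr]
    push_cast
    omega
  · intro l hl
    rw [hlSeq] at hl
    have hlq : (l : ℤ) ≤ q := by
      have : l ≤ q' := by
        by_cases hr : r = 0 <;> simp only [hNdef, hr, if_true, if_false] at hl <;> omega
      omega
    have hkey := key (l : ℤ) q hlq
    exact hA l (by linarith)
  · intro l hl
    rw [hlSeq] at hl
    apply hB l
    by_cases hr : r = 0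
    · have : l + 1 ≤ q' := by simp only [hNdef, hr, if_true] at hl; omega
      have hlq : (l : ℤ) + 1 ≤ q := by omega
      have hkey := key ((l : ℤ) + 1) q hlq
      have hexp : k * ((l : ℤ) + 1) = k * (l : ℤ) + k := by ring
      linarith
    · have : l ≤ q' := by simp only [hNdef, hr, if_false] at hl; omega
      have hlq : (l : ℤ) ≤ q := by omega
      have hkey := key (l : ℤ) q hlq
      have hr1 : 1 ≤ r := by omega
      linarith
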